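/- arXiv:1508.05157 — 3 statements merged into one kernel-verified Lean document; each statement's English description precedes it below -/
import Mathlib

section
/- For all n ≥ 1, ∑_{σ ∈ D_n} q^{ℓ_D(σ)} ∏_{i ∈ Rlmin_D(σ)} t_i = ∏_{i=2}^{n} ((1+q^{i-1})[i]_q − 1 + t_i). -/
open Finset

open scoped Classical

noncomputable section

variable {n : ℕ}

/-- `u <_F v` : strictly below in the forest order. -/
def strictR (r : Fin n → Fin n → Prop) (u v : Fin n) : Prop := r u v ∧ u ≠ v

/-- A naturally indexed plane forest structure on `Fin n`: a partial order whose
principal up-sets are chains (roots maximal), with natural indexing. -/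
def IsForest (r : Fin n → Fin n → Prop) : Prop :=
  IsPartialOrder (Fin n) r ∧ (∀ v u u', r v u → r v u' → r u u' ∨ r u' u) ∧
    ∀ u v, r u v → u ≤ v

/-- `h_v`: size of the principal order ideal generated by `v`. -/
def hook (r : Fin n → Fin n → Prop) (v : Fin n) : ℕ :=
  (univ.filter fun u => r u v).card

/-- q-integer `[m] = 1 + q + ... + q^(m-1)`. -/
def qInt {R : Type*} [CommRing R] (q : R) (m : ℕ) : R := ∑ i ∈ Finset.range m, q ^ i

/-- inversions of an (unsigned) labeling. -/
def invF (r : Fin n → Fin n → Prop) (w : Equiv.Perm (Fin n)) : ℕ :=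
  (univ.filter fun uv : Fin n × Fin n => strictR r uv.1 uv.2 ∧ w uv.2 < w uv.1).card

/-- a natural (order-preserving) labeling. -/
def NaturalL (r : Fin n → Fin n → Prop) (w : Equiv.Perm (Fin n)) : Prop :=
  ∀ u v, strictR r u v → w u < w v

/-- bottom-to-top maximum positions. -/
def BtmaxF (r : Fin n → Fin n → Prop) (w : Equiv.Perm (Fin n)) : Finset (Fin n) :=
  univ.filter fun v => ∀ u, strictR r u v → w u < w v

/-- label (in 1..n, with convention n+1 for roots) of the parent of `v`;
for a naturally indexed forest the parent of `v` is the minimal-index vertex strictly above `v`. -/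
def parentW (r : Fin n → Fin n → Prop) (w : Equiv.Perm (Fin n)) (v : Fin n) : ℕ :=
  if h : (univ.filter fun u => strictR r v u).Nonempty then
    (w ((univ.filter fun u => strictR r v u).min' h) : ℕ) + 1
  else n + 1

/-- major index: sum of hooks over descents. -/
def majF (r : Fin n → Fin n → Prop) (w : Equiv.Perm (Fin n)) : ℕ :=
  ∑ v ∈ univ.filter (fun v => parentW r w v < (w v : ℕ) + 1), hook r v

/-- M-code of a labeled forest. -/
def mcodeF (r : Fin n → Fin n → Prop) (w : Equiv.Perm (Fin n)) (i : Fin n) : ℕ :=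
  if (w i : ℕ) + 1 < parentW r w i then
    (univ.filter fun u => strictR r u i ∧ (w i : ℕ) + 1 ≤ (w u : ℕ) + 1 ∧
      (w u : ℕ) + 1 ≤ parentW r w i).card
  else
    (univ.filter fun u => strictR r u i ∧ ¬(parentW r w i ≤ (w u : ℕ) + 1 ∧
      (w u : ℕ) + 1 ≤ (w i : ℕ) + 1)).card

/-- cyclic bottom-to-top maxima. -/
def CbtmaxF (r : Fin n → Fin n → Prop) (w : Equiv.Perm (Fin n)) : Finset (Fin n) :=
  univ.filter fun v =>
    if (w v : ℕ) + 1 < parentW r w v then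
      ∀ u, strictR r u v → ¬((w v : ℕ) + 1 ≤ (w u : ℕ) + 1 ∧ (w u : ℕ) + 1 ≤ parentW r w v)
    else
      ∀ u, strictR r u v → (parentW r w v ≤ (w u : ℕ) + 1 ∧ (w u : ℕ) + 1 ≤ (w v : ℕ) + 1)

/-! ### Signed labelings, encoded as a permutation together with a sign function.
`wVal (σ, ε)` is the corresponding signed labeling `V(F) → {±1, …, ±n}`;
this is a bijective encoding of the set `W_B(F)` of signed labelings. -/

def wVal (p : Equiv.Perm (Fin n) × (Fin n → Bool)) (v : Fin n) : ℤ :=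
  (if p.2 v then -1 else 1) * ((p.1 v : ℤ) + 1)

/-- number of negative labels. -/
def n1F (w : Fin n → ℤ) : ℕ := (univ.filter fun v => w v < 0).card

/-- inversions of a signed labeling. -/
def invSF (r : Fin n → Fin n → Prop) (w : Fin n → ℤ) : ℕ :=
  (univ.filter fun uv : Fin n × Fin n => strictR r uv.1 uv.2 ∧ w uv.2 < w uv.1).card

def n2F (r : Fin n → Fin n → Prop) (w : Fin n → ℤ) : ℕ :=
  (univ.filter fun uv : Fin n × Fin n => strictR r uv.1 uv.2 ∧ w uv.1 + w uv.2 < 0).card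

def invBF (r : Fin n → Fin n → Prop) (w : Fin n → ℤ) : ℕ := invSF r w + n1F w + n2F r w

def invDF (r : Fin n → Fin n → Prop) (w : Fin n → ℤ) : ℕ := invSF r w + n2F r w

/-- the A-code of a signed labeled forest. -/
def acodeF (r : Fin n → Fin n → Prop) (w : Fin n → ℤ) (i : Fin n) : ℕ :=
  (univ.filter fun u => strictR r u i ∧ w i < w u).card +
  (univ.filter fun u => strictR r u i ∧ w u + w i < 0).card +
  (if w i < 0 then 1 else 0)

/-- signed bottom-to-top maximum positions. -/
def BtmaxBF (r : Fin n → Fin n → Prop) (w : Fin n → ℤ) : Finset (Fin n) :=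
  univ.filter fun v => 0 < w v ∧ ∀ u, strictR r u v → |w u| < w v

def leafF (r : Fin n → Fin n → Prop) (v : Fin n) : Prop := ∀ u, ¬ strictR r u v

/-- type D bottom-to-top maximum positions. -/
def BtmaxDF (r : Fin n → Fin n → Prop) (w : Fin n → ℤ) : Finset (Fin n) :=
  univ.filter fun v => ¬ leafF r v ∧ 0 < w v ∧ ∀ u, strictR r u v → |w u| < w v

/-! ### The map φ: one sorting step towards a natural labeling, recording the A-code. -/

def stepA (r : Fin n → Fin n → Prop) (i : Fin n) (w : Fin n → ℤ) : Fin n → ℤ :=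
  let A := (univ.filter fun u => r u i).image fun u => (w u).natAbs
  let M := A.max.getD 0
  let l := (A.erase M).sort (· ≤ ·)
  fun u =>
    if u = i then (M : ℤ)
    else if strictR r u i then
      (if w u < 0 then -1 else 1) *
        (l.getD ((univ.filter fun u' => strictR r u' i ∧ (w u').natAbs < (w u).natAbs).card) 0)
    else w u

/-- processing vertices `v_n, v_{n-1}, …, v_1` yields the natural labeling `w'`. -/
def sortA (r : Fin n → Fin n → Prop) (w : Fin n → ℤ) : Fin n → ℤ :=
  ((List.finRange n).reverse).foldl (fun w i => stepA r i w) w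

/-! ### The sorting algorithm for the sorting index. -/

/-- standardized label of `x` in the subtree rooted at `u`. -/
def stdVal (r : Fin n → Fin n → Prop) (u : Fin n) (w : Fin n → ℤ) (x : Fin n) : ℤ :=
  (if w x < 0 then -1 else 1) * (((univ.filter fun y => r y u ∧ |w y| < |w x|).card : ℤ) + 1)

/-- one step of the forest sorting algorithm (placing value `i+1`); the state is
(current labeling, recorded B-code, running total). -/
def sortStepB (r : Fin n → Fin n → Prop) (i : Fin n)
    (s : (Fin n → ℤ) × (Fin n → ℤ) × ℤ) : (Fin n → ℤ) × (Fin n → ℤ) × ℤ :=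
  let w := s.1
  let v := ((univ.filter fun x => |w x| = (i : ℤ) + 1).max).getD i
  let u := ((univ.filter fun x => r v x ∧ |w x| ≤ (i : ℤ) + 1).max).getD i
  let amt : ℤ := |stdVal r u w v| - stdVal r u w u - (if w u < 0 then 1 else 0)
  let w' := if 0 < w v then Function.update (Function.update w u (w v)) v (w u)
            else Function.update (Function.update w u (-(w v))) v (-(w u))
  (w', Function.update s.2.1 u amt, s.2.2 + amt)

def runB (r : Fin n → Fin n → Prop) (w : Fin n → ℤ) : (Fin n → ℤ) × (Fin n → ℤ) × ℤ :=
  ((List.finRange n).reverse).foldl (fun s i => sortStepB r i s) (w, fun _ => (0 : ℤ), 0)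

/-- the natural labeling produced by the sorting algorithm. -/
def sortedB (r : Fin n → Fin n → Prop) (w : Fin n → ℤ) : Fin n → ℤ := (runB r w).1

/-- B-code: `b_i` = amount contributed at the step in which `u = v_i`. -/
def bcodeB (r : Fin n → Fin n → Prop) (w : Fin n → ℤ) : Fin n → ℤ := (runB r w).2.1

/-- the sorting index of a signed labeled forest. -/
def sorBF (r : Fin n → Fin n → Prop) (w : Fin n → ℤ) : ℤ := (runB r w).2.2

/-! ### Cycles of signed permutations. -/

/-- the extension of `g : Fin n → ℤ` (a signed permutation written in one-line notation,
`g i` = image of `i+1`) to `{±1, …, ±n} ⊆ ℤ`. -/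
def extB (g : Fin n → ℤ) : ℤ → ℤ := fun k =>
  if h : 0 < k ∧ k ≤ (n : ℤ) then g ⟨k.toNat - 1, by omega⟩
  else if h' : -(n : ℤ) ≤ k ∧ k < 0 then -g ⟨(-k).toNat - 1, by omega⟩
  else k

/-- absolute values of the minimal-in-absolute-value elements of balanced cycles. -/
def CycBperm (g : Fin n → ℤ) : Finset ℕ :=
  (Finset.Icc 1 n).filter fun m =>
    (∀ j, j ≤ 2 * n → (extB g)^[j] (m : ℤ) ≠ -(m : ℤ)) ∧
    ∀ j, j ≤ 2 * n → (m : ℤ) ≤ |(extB g)^[j] (m : ℤ)|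

/-- the signed permutation `w ∘ w'⁻¹`, where `w'` is the sorted (natural) labeling. -/
def gOf (r : Fin n → Fin n → Prop) (w : Fin n → ℤ) : Fin n → ℤ := fun i =>
  w (((univ.filter fun v => sortedB r w v = (i : ℤ) + 1).max).getD i)

/-- type B minimal cycle vertices of a signed labeled forest. -/
def CycBF (r : Fin n → Fin n → Prop) (w : Fin n → ℤ) : Finset (Fin n) :=
  univ.filter fun v => (sortedB r w v).toNat ∈ CycBperm (gOf r w)

/-! ### Signed permutations as words. -/

/-- the inverse of the signed permutation `g`. -/
def ginv (g : Fin n → ℤ) (i : Fin n) : ℤ :=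
  let j := ((univ.filter fun x => |g x| = (i : ℤ) + 1).max).getD i
  if 0 < g j then (j : ℤ) + 1 else -((j : ℤ) + 1)

def invP (σ : Equiv.Perm (Fin n)) : ℕ :=
  (univ.filter fun ij : Fin n × Fin n => ij.1 < ij.2 ∧ σ ij.2 < σ ij.1).card

def invL (g : Fin n → ℤ) : ℕ :=
  (univ.filter fun ij : Fin n × Fin n => ij.1 < ij.2 ∧ g ij.2 < g ij.1).card

def n2L (g : Fin n → ℤ) : ℕ :=
  (univ.filter fun ij : Fin n × Fin n => ij.1 < ij.2 ∧ g ij.1 + g ij.2 < 0).card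

/-- one step of Straight Selection Sort for signed permutations (placing value `i+1`). -/
def sorStepP (i : Fin n) (s : (Fin n → ℤ) × ℤ) : (Fin n → ℤ) × ℤ :=
  let g := s.1
  let j := ((univ.filter fun x => |g x| = (i : ℤ) + 1).max).getD i
  let amt : ℤ := if 0 < g j then ((i : ℤ) + 1) - ((j : ℤ) + 1)
                 else ((i : ℤ) + 1) + ((j : ℤ) + 1) - 1
  let g' := if 0 < g j then Function.update (Function.update g j (g i)) i (g j)
            else Function.update (Function.update g j (-(g i))) i (-(g j))
  (g', s.2 + amt)

/-- the sorting index of a signed permutation. -/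
def sorBperm (g : Fin n → ℤ) : ℤ :=
  (((List.finRange n).reverse).foldl (fun s i => sorStepP i s) (g, 0)).2


noncomputable section ProofAux
open Finset

def rlmin (g : Fin n → ℤ) : Finset (Fin n) :=
  Finset.univ.filter fun i => 1 < g i ∧ ∀ j, i < j → g i < |g j|

def wt {R : Type*} [CommRing R] (q : R) (t : ℕ → R) (g : Fin n → ℤ) : R :=
  q ^ (invL g + n2L g) * ∏ i ∈ rlmin g, t (g i).toNat

def SW (n : ℕ) : Finset (Fin n → ℤ) :=
  (Finset.univ : Finset (Equiv.Perm (Fin n) × (Fin n → Bool))).image wVal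

def goodF (n : ℕ) (g : Fin n → ℤ) : Prop :=
  (∀ i, 1 ≤ (g i).natAbs ∧ (g i).natAbs ≤ n) ∧ Function.Injective fun i => (g i).natAbs

lemma wVal_natAbs {n : ℕ} (p : Equiv.Perm (Fin n) × (Fin n → Bool)) (i : Fin n) :
    (wVal p i).natAbs = (p.1 i : ℕ) + 1 := by
  have h : ((p.1 i : ℤ)) = ((p.1 i : ℕ) : ℤ) := rfl
  cases h2 : p.2 i <;> simp [wVal, h2, h] <;> omega

lemma wVal_neg_iff {n : ℕ} (p : Equiv.Perm (Fin n) × (Fin n → Bool)) (i : Fin n) :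
    wVal p i < 0 ↔ p.2 i = true := by
  have h : ((p.1 i : ℤ)) = ((p.1 i : ℕ) : ℤ) := rfl
  cases h2 : p.2 i <;> simp [wVal, h2, h] <;> omega

lemma wVal_injective : Function.Injective (wVal (n := n)) := by
  intro p₁ p₂ h
  have hA : ∀ i : Fin n, (p₁.1 i : ℕ) + 1 = (p₂.1 i : ℕ) + 1 := by
    intro i; rw [← wVal_natAbs, ← wVal_natAbs, h]
  have h1 : p₁.1 = p₂.1 := by
    apply Equiv.ext; intro i
    exact Fin.val_injective (by have := hA i; omega)
  have h2 : p₁.2 = p₂.2 := by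
    funext i
    have e1 := wVal_neg_iff p₁ i
    rw [h] at e1
    exact Bool.eq_iff_iff.mpr (e1.symm.trans (wVal_neg_iff p₂ i))
  exact Prod.ext h1 h2

lemma goodF_wVal (p : Equiv.Perm (Fin n) × (Fin n → Bool)) : goodF n (wVal p) := by
  constructor
  · intro i; rw [wVal_natAbs]; have := (p.1 i).isLt; omega
  · intro i j hij
    simp only [wVal_natAbs] at hij
    exact p.1.injective (Fin.val_injective (by omega))

lemma mem_SW {g : Fin n → ℤ} : g ∈ SW n ↔ goodF n g := by
  constructor
  · intro hg
    obtain ⟨p, -, rfl⟩ := Finset.mem_image.mp hg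
    exact goodF_wVal p
  · intro hg
    have hbd : ∀ i, (g i).natAbs - 1 < n := fun i => by have := hg.1 i; omega
    have hinj : Function.Injective (fun i => (⟨(g i).natAbs - 1, hbd i⟩ : Fin n)) := by
      intro a b hab
      simp only [Fin.mk.injEq] at hab
      have ha := (hg.1 a).1; have hb := (hg.1 b).1
      exact hg.2 (show (g a).natAbs = (g b).natAbs by omega)
    refine Finset.mem_image.mpr
      ⟨(Equiv.ofBijective _ (Finite.injective_iff_bijective.mp hinj),
        fun i => decide (g i < 0)), Finset.mem_univ _, ?_⟩
    funext i
    show (if decide (g i < 0) = true then (-1 : ℤ) else 1) *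
      ((((g i).natAbs - 1 : ℕ) : ℤ) + 1) = g i
    have := (hg.1 i).1
    rcases hlt : decide (g i < 0)
    · simp only [Bool.false_eq_true, if_false, one_mul, decide_eq_false_iff_not, not_lt] at hlt ⊢
      omega
    · simp only [if_true, decide_eq_true_eq] at hlt ⊢
      omega

lemma exists_natAbs_eq {g : Fin n → ℤ} (hg : goodF n g) {m : ℕ} (h1 : 1 ≤ m) (h2 : m ≤ n) :
    ∃ i, (g i).natAbs = m := by
  have hbd : ∀ i, (g i).natAbs - 1 < n := fun i => by have := hg.1 i; omega
  have hinj : Function.Injective (fun i => (⟨(g i).natAbs - 1, hbd i⟩ : Fin n)) := by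
    intro a b hab
    simp only [Fin.mk.injEq] at hab
    have ha := (hg.1 a).1; have hb := (hg.1 b).1
    exact hg.2 (show (g a).natAbs = (g b).natAbs by omega)
  obtain ⟨i, hi⟩ := Finite.surjective_of_injective hinj ⟨m - 1, by omega⟩
  simp only [Fin.mk.injEq] at hi
  exact ⟨i, by have := (hg.1 i).1; omega⟩

/-! ### the sign-flip involution -/

def nu (g : Fin n → ℤ) : Fin n → ℤ := fun i => if (g i).natAbs = 1 then -g i else g i

lemma natAbs_nu (g : Fin n → ℤ) (i : Fin n) : (nu g i).natAbs = (g i).natAbs := by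
  unfold nu; split_ifs <;> simp

lemma nu_nu (g : Fin n → ℤ) : nu (nu g) = g := by
  funext i
  show (if (nu g i).natAbs = 1 then -(nu g i) else nu g i) = g i
  rw [natAbs_nu]
  by_cases h : (g i).natAbs = 1 <;> simp [nu, h]

lemma goodF_nu {g : Fin n → ℤ} (hg : goodF n g) : goodF n (nu g) := by
  refine ⟨fun i => by rw [natAbs_nu]; exact hg.1 i, ?_⟩
  simp only [natAbs_nu]
  exact hg.2

lemma wt_nu {R : Type*} [CommRing R] (q : R) (t : ℕ → R) {g : Fin n → ℤ}
    (hg : goodF n g) : wt q t (nu g) = wt q t g := by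
  have hiff : ∀ i j : Fin n, i ≠ j →
      ((nu g j < nu g i ↔ g j < g i) ∧ (nu g i + nu g j < 0 ↔ g i + g j < 0)) := by
    intro i j hij
    have hbi := (hg.1 i).1; have hbj := (hg.1 j).1
    by_cases h1 : (g i).natAbs = 1 <;> by_cases h2 : (g j).natAbs = 1
    · exact absurd (hg.2 (h1.trans h2.symm)) hij
    · rw [show nu g i = -(g i) from if_pos h1, show nu g j = g j from if_neg h2]
      constructor <;> omega
    · rw [show nu g i = g i from if_neg h1, show nu g j = -(g j) from if_pos h2]
      constructor <;> omega
    · rw [show nu g i = g i from if_neg h1, show nu g j = g j from if_neg h2]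
      exact ⟨Iff.rfl, Iff.rfl⟩
  have hinv : invL (nu g) = invL g := by
    unfold invL
    congr 1
    ext ij
    simp only [mem_filter, mem_univ, true_and]
    exact and_congr_right fun hlt => (hiff ij.1 ij.2 (ne_of_lt hlt)).1
  have hn2 : n2L (nu g) = n2L g := by
    unfold n2L
    congr 1
    ext ij
    simp only [mem_filter, mem_univ, true_and]
    exact and_congr_right fun hlt => (hiff ij.1 ij.2 (ne_of_lt hlt)).2
  have habsj : ∀ j, |nu g j| = |g j| := by
    intro j
    rw [Int.abs_eq_natAbs, Int.abs_eq_natAbs, natAbs_nu]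
  have hrl : rlmin (nu g) = rlmin g := by
    unfold rlmin
    ext i
    simp only [mem_filter, mem_univ, true_and]
    by_cases h1 : (g i).natAbs = 1
    · rw [show nu g i = -(g i) from if_pos h1]
      constructor
      · rintro ⟨h, -⟩; omega
      · rintro ⟨h, -⟩; omega
    · rw [show nu g i = g i from if_neg h1]
      exact and_congr_right fun _ =>
        forall_congr' fun j => imp_congr Iff.rfl (by rw [habsj j])
  unfold wt
  rw [hinv, hn2, hrl]
  congr 1
  apply Finset.prod_congr rfl
  intro i hi
  simp only [rlmin, mem_filter] at hi
  have h1 : (g i).natAbs ≠ 1 := by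
    have := hi.2.1; omega
  rw [show nu g i = g i from if_neg h1]

lemma n1F_nu {g : Fin n → ℤ} (hg : goodF n g) (hn : 1 ≤ n) :
    n1F (nu g) % 2 = (n1F g + 1) % 2 := by
  obtain ⟨k, hk⟩ := exists_natAbs_eq hg le_rfl hn
  have huniq : ∀ i, (g i).natAbs = 1 → i = k := fun i hi => hg.2 (hi.trans hk.symm)
  have hnuk : nu g k = -(g k) := if_pos hk
  have hnu : ∀ i, i ≠ k → nu g i = g i := by
    intro i hi
    exact if_neg (fun h => hi (huniq i h))
  unfold n1F
  by_cases hgk : g k < 0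
  · have hset : (univ.filter (fun i => nu g i < 0))
        = (univ.filter (fun i => g i < 0)).erase k := by
      ext i
      simp only [mem_filter, mem_univ, true_and, mem_erase]
      rcases eq_or_ne i k with rfl | hne
      · rw [hnuk]; constructor
        · intro h; omega
        · rintro ⟨h, -⟩; exact absurd rfl h
      · rw [hnu i hne]; exact ⟨fun h => ⟨hne, h⟩, fun h => h.2⟩
    rw [hset, Finset.card_erase_of_mem (by simp [hgk])]
    have hpos : 0 < (univ.filter (fun i => g i < 0)).card :=
      Finset.card_pos.mpr ⟨k, by simp [hgk]⟩
    omega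
  · have hset : (univ.filter (fun i => nu g i < 0))
        = insert k (univ.filter (fun i => g i < 0)) := by
      ext i
      simp only [mem_filter, mem_univ, true_and, Finset.mem_insert]
      rcases eq_or_ne i k with rfl | hne
      · rw [hnuk]
        constructor
        · intro _; exact Or.inl rfl
        · intro _; omega
      · rw [hnu i hne]
        exact ⟨fun h => Or.inr h, fun h => h.elim (fun h' => absurd h' hne) id⟩
    rw [hset, Finset.card_insert_of_notMem (by simp [hgk])]

/-! ### insertion -/

def insF (n : ℕ) (k : Fin (n+1)) (b : Bool) (g : Fin n → ℤ) : Fin (n+1) → ℤ :=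
  Fin.insertNth k (if b then -((n : ℤ)+1) else (n : ℤ)+1) g

lemma count_ge_aux (a m : ℕ) : (∑ j ∈ Finset.range m, if a ≤ j then (1:ℕ) else 0) = m - a := by
  induction m with
  | zero => simp
  | succ m ih => rw [Finset.sum_range_succ, ih]; split_ifs <;> omega

lemma count_lt_aux (a m : ℕ) : (∑ j ∈ Finset.range m, if j < a then (1:ℕ) else 0) = min a m := by
  induction m with
  | zero => simp
  | succ m ih => rw [Finset.sum_range_succ, ih]; split_ifs <;> omega

lemma sum_pairs_succAbove {n : ℕ} (k : Fin (n+1)) (f : Fin (n+1) → Fin (n+1) → ℕ) :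
    (∑ i, ∑ j, f i j) = f k k + (∑ j, f k (k.succAbove j)) +
      (∑ i, f (k.succAbove i) k) + ∑ i, ∑ j, f (k.succAbove i) (k.succAbove j) := by
  rw [Fin.sum_univ_succAbove (fun i => ∑ j, f i j) k,
      Fin.sum_univ_succAbove (fun j => f k j) k]
  rw [Finset.sum_congr rfl fun i (_ : i ∈ univ) =>
    Fin.sum_univ_succAbove (fun j => f (k.succAbove i) j) k]
  rw [Finset.sum_add_distrib]
  ring

lemma insF_apply_same {n : ℕ} (k : Fin (n+1)) (b : Bool) (g : Fin n → ℤ) :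
    insF n k b g k = (if b then -((n : ℤ)+1) else (n : ℤ)+1) := by
  simp [insF]

lemma insF_apply_succAbove {n : ℕ} (k : Fin (n+1)) (b : Bool) (g : Fin n → ℤ) (i : Fin n) :
    insF n k b g (k.succAbove i) = g i := by
  simp [insF]

lemma natAbs_insF_same {n : ℕ} (k : Fin (n+1)) (b : Bool) (g : Fin n → ℤ) :
    (insF n k b g k).natAbs = n + 1 := by
  rw [insF_apply_same]; cases b <;> simp <;> omega

lemma goodF_insF {g : Fin n → ℤ} (hg : goodF n g) (k : Fin (n+1)) (b : Bool) :
    goodF (n+1) (insF n k b g) := by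
  constructor
  · intro i
    rcases eq_or_ne i k with rfl | hne
    · rw [natAbs_insF_same]; omega
    · obtain ⟨i', rfl⟩ := Fin.exists_succAbove_eq hne
      rw [insF_apply_succAbove]
      have := hg.1 i'; omega
  · intro i j hij
    by_cases hnei : i = k
    · by_cases hnej : j = k
      · rw [hnei, hnej]
      · exfalso
        obtain ⟨j', hj'⟩ := Fin.exists_succAbove_eq hnej
        rw [hnei, ← hj'] at hij
        have hij' : (insF n k b g k).natAbs = (insF n k b g (k.succAbove j')).natAbs := hij
        rw [natAbs_insF_same, insF_apply_succAbove] at hij'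
        have := (hg.1 j').2; omega
    · by_cases hnej : j = k
      · exfalso
        obtain ⟨i', hi'⟩ := Fin.exists_succAbove_eq hnei
        rw [hnej, ← hi'] at hij
        have hij' : (insF n k b g (k.succAbove i')).natAbs = (insF n k b g k).natAbs := hij
        rw [natAbs_insF_same, insF_apply_succAbove] at hij'
        have := (hg.1 i').2; omega
      · obtain ⟨i', hi'⟩ := Fin.exists_succAbove_eq hnei
        obtain ⟨j', hj'⟩ := Fin.exists_succAbove_eq hnej
        rw [← hi', ← hj'] at hij ⊢
        have hij' : (insF n k b g (k.succAbove i')).natAbs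
            = (insF n k b g (k.succAbove j')).natAbs := hij
        rw [insF_apply_succAbove, insF_apply_succAbove] at hij'
        exact congrArg k.succAbove (hg.2 hij')

lemma goodF_removeNth {g : Fin (n+1) → ℤ} (hg : goodF (n+1) g) {k : Fin (n+1)}
    (hk : (g k).natAbs = n+1) : goodF n (k.removeNth g) := by
  have hr : ∀ i, k.removeNth g i = g (k.succAbove i) := fun i => rfl
  constructor
  · intro i
    rw [hr]
    have h1 := hg.1 (k.succAbove i)
    have h2 : (g (k.succAbove i)).natAbs ≠ n + 1 := by
      intro h
      exact k.succAbove_ne i (hg.2 (h.trans hk.symm))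
    omega
  · intro i j hij
    simp only [hr] at hij
    exact Fin.succAbove_right_injective (hg.2 hij)

lemma invL_eq_sum {m : ℕ} (g : Fin m → ℤ) :
    invL g = ∑ i, ∑ j, if (i < j ∧ g j < g i) then (1:ℕ) else 0 := by
  rw [invL, Finset.card_filter, Fintype.sum_prod_type]

lemma n2L_eq_sum {m : ℕ} (g : Fin m → ℤ) :
    n2L g = ∑ i, ∑ j, if (i < j ∧ g i + g j < 0) then (1:ℕ) else 0 := by
  rw [n2L, Finset.card_filter, Fintype.sum_prod_type]

lemma count_ge_fin (n : ℕ) (k : Fin (n+1)) :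
    (∑ j : Fin n, if (k:ℕ) ≤ (j:ℕ) then (1:ℕ) else 0) = n - (k:ℕ) := by
  rw [Fin.sum_univ_eq_sum_range (fun m => if (k:ℕ) ≤ m then (1:ℕ) else 0), count_ge_aux]

lemma count_lt_fin (n : ℕ) (k : Fin (n+1)) :
    (∑ j : Fin n, if (j:ℕ) < (k:ℕ) then (1:ℕ) else 0) = min (k:ℕ) n := by
  rw [Fin.sum_univ_eq_sum_range (fun m => if m < (k:ℕ) then (1:ℕ) else 0), count_lt_aux]

lemma insF_false (k : Fin (n+1)) (g : Fin n → ℤ) :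
    insF n k false g = Fin.insertNth k ((n:ℤ)+1) g := by
  simp [insF]

lemma insF_true (k : Fin (n+1)) (g : Fin n → ℤ) :
    insF n k true g = Fin.insertNth k (-((n:ℤ)+1)) g := by
  simp [insF]

lemma invL_insF {g : Fin n → ℤ} (hg : goodF n g) (k : Fin (n+1)) (b : Bool) :
    invL (insF n k b g) = invL g + (if b then (k : ℕ) else n - (k : ℕ)) := by
  have hbd : ∀ i, (g i).natAbs ≤ n := fun i => (hg.1 i).2
  cases b
  · rw [insF_false]
    set g' : Fin (n+1) → ℤ := Fin.insertNth k ((n:ℤ)+1) g with hg'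
    rw [invL_eq_sum,
      sum_pairs_succAbove k (fun i j => if (i < j ∧ g' j < g' i) then (1:ℕ) else 0)]
    have e1 : (if (k < k ∧ g' k < g' k) then (1:ℕ) else 0) = 0 := by simp
    have e2 : (∑ j, if (k < k.succAbove j ∧ g' (k.succAbove j) < g' k) then (1:ℕ) else 0)
        = n - (k:ℕ) := by
      rw [← count_ge_fin n k]
      refine Finset.sum_congr rfl fun j _ => if_congr ?_ rfl rfl
      rw [hg', Fin.insertNth_apply_succAbove, Fin.insertNth_apply_same,
        Fin.lt_succAbove_iff_le_castSucc, Fin.le_def, Fin.coe_castSucc]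
      have h1 := hbd j
      exact ⟨fun h => h.1, fun h => ⟨h, by omega⟩⟩
    have e3 : (∑ i, if (k.succAbove i < k ∧ g' k < g' (k.succAbove i)) then (1:ℕ) else 0)
        = 0 := by
      refine Finset.sum_eq_zero fun i _ => if_neg ?_
      rw [hg', Fin.insertNth_apply_succAbove, Fin.insertNth_apply_same]
      rintro ⟨-, h2⟩
      have h1 := hbd i; omega
    have e4 : (∑ i, ∑ j, if (k.succAbove i < k.succAbove j ∧ g' (k.succAbove j) < g' (k.succAbove i)) then (1:ℕ) else 0)
        = invL g := by
      rw [invL_eq_sum]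
      refine Finset.sum_congr rfl fun i _ => Finset.sum_congr rfl fun j _ => if_congr ?_ rfl rfl
      rw [hg', Fin.insertNth_apply_succAbove, Fin.insertNth_apply_succAbove,
        Fin.succAbove_lt_succAbove_iff]
    rw [e1, e2, e3, e4, if_neg Bool.false_ne_true]
    omega
  · rw [insF_true]
    set g' : Fin (n+1) → ℤ := Fin.insertNth k (-((n:ℤ)+1)) g with hg'
    rw [invL_eq_sum,
      sum_pairs_succAbove k (fun i j => if (i < j ∧ g' j < g' i) then (1:ℕ) else 0)]
    have e1 : (if (k < k ∧ g' k < g' k) then (1:ℕ) else 0) = 0 := by simp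
    have e2 : (∑ j, if (k < k.succAbove j ∧ g' (k.succAbove j) < g' k) then (1:ℕ) else 0)
        = 0 := by
      refine Finset.sum_eq_zero fun j _ => if_neg ?_
      rw [hg', Fin.insertNth_apply_succAbove, Fin.insertNth_apply_same]
      rintro ⟨-, h2⟩
      have h1 := hbd j; omega
    have e3 : (∑ i, if (k.succAbove i < k ∧ g' k < g' (k.succAbove i)) then (1:ℕ) else 0)
        = min (k:ℕ) n := by
      rw [← count_lt_fin n k]
      refine Finset.sum_congr rfl fun i _ => if_congr ?_ rfl rfl
      rw [hg', Fin.insertNth_apply_succAbove, Fin.insertNth_apply_same,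
        Fin.succAbove_lt_iff_castSucc_lt, Fin.lt_def, Fin.coe_castSucc]
      have h1 := hbd i
      exact ⟨fun h => h.1, fun h => ⟨h, by omega⟩⟩
    have e4 : (∑ i, ∑ j, if (k.succAbove i < k.succAbove j ∧ g' (k.succAbove j) < g' (k.succAbove i)) then (1:ℕ) else 0)
        = invL g := by
      rw [invL_eq_sum]
      refine Finset.sum_congr rfl fun i _ => Finset.sum_congr rfl fun j _ => if_congr ?_ rfl rfl
      rw [hg', Fin.insertNth_apply_succAbove, Fin.insertNth_apply_succAbove,
        Fin.succAbove_lt_succAbove_iff]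
    rw [e1, e2, e3, e4, if_pos rfl]
    have := k.isLt
    omega

lemma n2L_insF {g : Fin n → ℤ} (hg : goodF n g) (k : Fin (n+1)) (b : Bool) :
    n2L (insF n k b g) = n2L g + (if b then n else 0) := by
  have hbd : ∀ i, (g i).natAbs ≤ n := fun i => (hg.1 i).2
  cases b
  · rw [insF_false]
    set g' : Fin (n+1) → ℤ := Fin.insertNth k ((n:ℤ)+1) g with hg'
    rw [n2L_eq_sum,
      sum_pairs_succAbove k (fun i j => if (i < j ∧ g' i + g' j < 0) then (1:ℕ) else 0)]
    have e1 : (if (k < k ∧ g' k + g' k < 0) then (1:ℕ) else 0) = 0 := by simp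
    have e2 : (∑ j, if (k < k.succAbove j ∧ g' k + g' (k.succAbove j) < 0) then (1:ℕ) else 0)
        = 0 := by
      refine Finset.sum_eq_zero fun j _ => if_neg ?_
      rw [hg', Fin.insertNth_apply_succAbove, Fin.insertNth_apply_same]
      rintro ⟨-, h2⟩
      have h1 := hbd j; omega
    have e3 : (∑ i, if (k.succAbove i < k ∧ g' (k.succAbove i) + g' k < 0) then (1:ℕ) else 0)
        = 0 := by
      refine Finset.sum_eq_zero fun i _ => if_neg ?_
      rw [hg', Fin.insertNth_apply_succAbove, Fin.insertNth_apply_same]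
      rintro ⟨-, h2⟩
      have h1 := hbd i; omega
    have e4 : (∑ i, ∑ j, if (k.succAbove i < k.succAbove j ∧ g' (k.succAbove i) + g' (k.succAbove j) < 0) then (1:ℕ) else 0)
        = n2L g := by
      rw [n2L_eq_sum]
      refine Finset.sum_congr rfl fun i _ => Finset.sum_congr rfl fun j _ => if_congr ?_ rfl rfl
      rw [hg', Fin.insertNth_apply_succAbove, Fin.insertNth_apply_succAbove,
        Fin.succAbove_lt_succAbove_iff]
    rw [e1, e2, e3, e4, if_neg Bool.false_ne_true]
    omega
  · rw [insF_true]
    set g' : Fin (n+1) → ℤ := Fin.insertNth k (-((n:ℤ)+1)) g with hg'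
    rw [n2L_eq_sum,
      sum_pairs_succAbove k (fun i j => if (i < j ∧ g' i + g' j < 0) then (1:ℕ) else 0)]
    have e1 : (if (k < k ∧ g' k + g' k < 0) then (1:ℕ) else 0) = 0 := by simp
    have e2 : (∑ j, if (k < k.succAbove j ∧ g' k + g' (k.succAbove j) < 0) then (1:ℕ) else 0)
        = n - (k:ℕ) := by
      rw [← count_ge_fin n k]
      refine Finset.sum_congr rfl fun j _ => if_congr ?_ rfl rfl
      rw [hg', Fin.insertNth_apply_succAbove, Fin.insertNth_apply_same,
        Fin.lt_succAbove_iff_le_castSucc, Fin.le_def, Fin.coe_castSucc]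
      have h1 := hbd j
      exact ⟨fun h => h.1, fun h => ⟨h, by omega⟩⟩
    have e3 : (∑ i, if (k.succAbove i < k ∧ g' (k.succAbove i) + g' k < 0) then (1:ℕ) else 0)
        = min (k:ℕ) n := by
      rw [← count_lt_fin n k]
      refine Finset.sum_congr rfl fun i _ => if_congr ?_ rfl rfl
      rw [hg', Fin.insertNth_apply_succAbove, Fin.insertNth_apply_same,
        Fin.succAbove_lt_iff_castSucc_lt, Fin.lt_def, Fin.coe_castSucc]
      have h1 := hbd i
      exact ⟨fun h => h.1, fun h => ⟨h, by omega⟩⟩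
    have e4 : (∑ i, ∑ j, if (k.succAbove i < k.succAbove j ∧ g' (k.succAbove i) + g' (k.succAbove j) < 0) then (1:ℕ) else 0)
        = n2L g := by
      rw [n2L_eq_sum]
      refine Finset.sum_congr rfl fun i _ => Finset.sum_congr rfl fun j _ => if_congr ?_ rfl rfl
      rw [hg', Fin.insertNth_apply_succAbove, Fin.insertNth_apply_succAbove,
        Fin.succAbove_lt_succAbove_iff]
    rw [e1, e2, e3, e4, if_pos rfl]
    have := k.isLt
    omega

lemma rlmin_prod_insF {R : Type*} [CommRing R] (t : ℕ → R) {g : Fin n → ℤ}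
    (hg : goodF n g) (hn : 1 ≤ n) (k : Fin (n+1)) (b : Bool) :
    (∏ i ∈ rlmin (insF n k b g), t ((insF n k b g i).toNat))
      = (if b = false ∧ k = Fin.last n then t (n+1) else 1) *
        ∏ i ∈ rlmin g, t ((g i).toNat) := by
  have hbd : ∀ i, (g i).natAbs ≤ n := fun i => (hg.1 i).2
  set g' : Fin (n+1) → ℤ := insF n k b g with hgdef
  have hsame : g' k = (if b then -((n:ℤ)+1) else (n:ℤ)+1) := insF_apply_same k b g
  have hsucc : ∀ i, g' (k.succAbove i) = g i := insF_apply_succAbove k b g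
  have habs : ∀ j : Fin (n+1), j ≠ k → (g' j).natAbs ≤ n := by
    intro j hj
    obtain ⟨j', hj'⟩ := Fin.exists_succAbove_eq hj
    rw [← hj', hsucc]; exact hbd j'
  have hcond : (1 < g' k ∧ ∀ j, k < j → g' k < |g' j|) ↔ (b = false ∧ k = Fin.last n) := by
    constructor
    · rintro ⟨h1, h2⟩
      have hb : b = false := by
        cases b
        · rfl
        · rw [hsame, if_pos rfl] at h1; omega
      refine ⟨hb, ?_⟩
      by_contra hlast
      have hklt : k < Fin.last n := lt_of_le_of_ne (Fin.le_last k) hlast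
      have h3 := h2 (Fin.last n) hklt
      have hle := habs (Fin.last n) (ne_of_gt hklt)
      rw [hsame, hb, if_neg Bool.false_ne_true, Int.abs_eq_natAbs] at h3
      omega
    · rintro ⟨hb, hlast⟩
      subst hb; subst hlast
      refine ⟨?_, fun j hj => absurd hj (Fin.not_lt.mpr (Fin.le_last j))⟩
      rw [hsame, if_neg Bool.false_ne_true]
      have : (1:ℤ) ≤ (n:ℤ) := by exact_mod_cast hn
      omega
  have hval : (b = false ∧ k = Fin.last n) → t ((g' k).toNat) = t (n+1) := by
    rintro ⟨hb, -⟩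
    rw [hsame, hb, if_neg Bool.false_ne_true,
      show (((n:ℤ)+1)).toNat = n+1 from by omega]
  rw [rlmin, Finset.prod_filter, Fin.prod_univ_succAbove
    (fun i => if (1 < g' i ∧ ∀ j, i < j → g' i < |g' j|) then t ((g' i).toNat) else 1) k,
    rlmin, Finset.prod_filter]
  congr 1
  · by_cases hc : b = false ∧ k = Fin.last n
    · rw [if_pos (hcond.mpr hc), if_pos hc, hval hc]
    · rw [if_neg (fun h => hc (hcond.mp h)), if_neg hc]
  · refine Finset.prod_congr rfl fun i _ => ?_
    rw [hsucc]
    refine if_congr ?_ rfl rfl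
    constructor
    · rintro ⟨h1, h2⟩
      refine ⟨h1, fun j hj => ?_⟩
      have h3 := h2 (k.succAbove j) (Fin.succAbove_lt_succAbove_iff.mpr hj)
      rwa [hsucc] at h3
    · rintro ⟨h1, h2⟩
      refine ⟨h1, fun j hj => ?_⟩
      rcases eq_or_ne j k with rfl | hne
      · rw [Int.abs_eq_natAbs, natAbs_insF_same]
        have := hbd i
        have h4 : (g i : ℤ) ≤ ((g i).natAbs : ℤ) := Int.le_natAbs
        push_cast
        omega
      · obtain ⟨j', hj'⟩ := Fin.exists_succAbove_eq hne
        rw [← hj', hsucc]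
        rw [← hj'] at hj
        exact h2 j' (Fin.succAbove_lt_succAbove_iff.mp hj)

lemma wt_insF {R : Type*} [CommRing R] (q : R) (t : ℕ → R) {g : Fin n → ℤ}
    (hg : goodF n g) (hn : 1 ≤ n) (k : Fin (n+1)) (b : Bool) :
    wt q t (insF n k b g) =
      ((if b then q ^ (n + (k : ℕ)) else q ^ (n - (k : ℕ))) *
        (if b = false ∧ k = Fin.last n then t (n+1) else 1)) * wt q t g := by
  rw [wt, wt, invL_insF hg, n2L_insF hg, rlmin_prod_insF t hg hn k b]
  cases b
  · rw [if_neg Bool.false_ne_true, if_neg Bool.false_ne_true, if_neg Bool.false_ne_true,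
      show invL g + (n - (k:ℕ)) + (n2L g + 0) = (invL g + n2L g) + (n - (k:ℕ)) from by ring,
      pow_add]
    ring
  · rw [if_pos rfl, if_pos rfl, if_pos rfl,
      show invL g + (k:ℕ) + (n2L g + n) = (invL g + n2L g) + (n + (k:ℕ)) from by ring,
      pow_add]
    ring

lemma existsUnique_posK {g : Fin (n+1) → ℤ} (hg : goodF (n+1) g) :
    ∃! i, (g i).natAbs = n+1 := by
  obtain ⟨i, hi⟩ := exists_natAbs_eq hg (by omega) le_rfl
  exact ⟨i, hi, fun j hj => hg.2 (hj.trans hi.symm)⟩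

def posK {g : Fin (n+1) → ℤ} (hg : goodF (n+1) g) : Fin (n+1) :=
  Fintype.choose (fun i => (g i).natAbs = n+1) (existsUnique_posK hg)

lemma posK_spec {g : Fin (n+1) → ℤ} (hg : goodF (n+1) g) :
    (g (posK hg)).natAbs = n+1 :=
  Fintype.choose_spec (fun i => (g i).natAbs = n+1) (existsUnique_posK hg)

lemma posK_eq {g : Fin (n+1) → ℤ} (hg : goodF (n+1) g) {k : Fin (n+1)}
    (hk : (g k).natAbs = n+1) : posK hg = k :=
  hg.2 ((posK_spec hg).trans hk.symm)

lemma insF_reconstruct {g : Fin (n+1) → ℤ} (hg : goodF (n+1) g) :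
    insF n (posK hg) (decide (g (posK hg) < 0)) ((posK hg).removeNth g) = g := by
  funext j
  rcases eq_or_ne j (posK hg) with heq | hne
  · rw [heq, insF_apply_same]
    have h1 : (g (posK hg)).natAbs = n+1 := posK_spec hg
    by_cases hlt : g (posK hg) < 0
    · rw [if_pos (by simpa using hlt)]
      omega
    · rw [if_neg (by simpa using hlt)]
      omega
  · obtain ⟨j', hj'⟩ := Fin.exists_succAbove_eq hne
    rw [← hj', insF_apply_succAbove]
    rfl

lemma sign_insF (k : Fin (n+1)) (b : Bool) (g : Fin n → ℤ) :
    decide (insF n k b g k < 0) = b := by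
  rw [insF_apply_same]; cases b
  · simp only [Bool.false_eq_true, if_false, decide_eq_false_iff_not, not_lt]
    omega
  · simp only [if_true, decide_eq_true_eq]
    omega

lemma removeNth_insF (k : Fin (n+1)) (b : Bool) (g : Fin n → ℤ) :
    k.removeNth (insF n k b g) = g := by
  funext i
  show insF n k b g (k.succAbove i) = g i
  exact insF_apply_succAbove k b g i

lemma sum_ins_factor {R : Type*} [CommRing R] (q : R) (t : ℕ → R) :
    (∑ x : Fin (n+1) × Bool,
      ((if x.2 then q ^ (n + (x.1 : ℕ)) else q ^ (n - (x.1 : ℕ))) *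
        (if x.2 = false ∧ x.1 = Fin.last n then t (n+1) else 1)))
      = (1 + q ^ n) * qInt q (n+1) - 1 + t (n+1) := by
  rw [Fintype.sum_prod_type]
  have hsum : ∀ k : Fin (n+1),
      (∑ b : Bool, ((if b then q ^ (n + (k:ℕ)) else q ^ (n - (k:ℕ))) *
        (if b = false ∧ k = Fin.last n then t (n+1) else 1)))
      = q ^ (n + (k:ℕ)) + q ^ (n - (k:ℕ)) * (if k = Fin.last n then t (n+1) else 1) := by
    intro k
    rw [Fintype.sum_bool]
    simp
  rw [Finset.sum_congr rfl fun k _ => hsum k, Finset.sum_add_distrib]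
  have h1 : (∑ k : Fin (n+1), q ^ (n + (k:ℕ))) = q ^ n * qInt q (n+1) := by
    rw [qInt, Finset.mul_sum, Fin.sum_univ_eq_sum_range (fun m => q ^ (n + m))]
    exact Finset.sum_congr rfl fun m _ => pow_add q n m
  have h2 : (∑ k : Fin (n+1), q ^ (n - (k:ℕ)) * (if k = Fin.last n then t (n+1) else 1))
      = (qInt q (n+1) - 1) + t (n+1) := by
    rw [Fin.sum_univ_castSucc]
    have hc : ∀ k : Fin n, q ^ (n - ((k.castSucc : Fin (n+1)) : ℕ)) *
        (if (k.castSucc : Fin (n+1)) = Fin.last n then t (n+1) else 1) = q ^ (n - (k:ℕ)) := by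
      intro k
      rw [if_neg (Fin.castSucc_lt_last k).ne, mul_one, Fin.coe_castSucc]
    rw [Finset.sum_congr rfl fun k _ => hc k, if_pos rfl, Fin.val_last, Nat.sub_self,
      pow_zero, one_mul]
    congr 1
    rw [Fin.sum_univ_eq_sum_range (fun m => q ^ (n - m)), ← Finset.sum_range_reflect,
      qInt, Finset.sum_range_succ' (fun m => q ^ m) n]
    simp only [pow_zero]
    rw [add_sub_cancel_right]
    refine Finset.sum_congr rfl fun j hj => ?_
    rw [Finset.mem_range] at hj
    congr 1
    omega
  rw [h1, h2]
  ring

lemma sum_SW {R : Type*} [CommRing R] (q : R) (t : ℕ → R) (hn : 1 ≤ n) :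
    ∑ g ∈ SW n, wt q t g
      = 2 * ∏ i ∈ Finset.Icc 2 n, ((1 + q ^ (i - 1)) * qInt q i - 1 + t i) := by
  induction n, hn using Nat.le_induction with
  | base =>
    rw [SW, Finset.sum_image (fun x _ y _ h => wVal_injective h)]
    have hwt : ∀ p : Equiv.Perm (Fin 1) × (Fin 1 → Bool), wt q t (wVal p) = 1 := by
      intro p
      have hinv : invL (wVal p) = 0 := by
        unfold invL
        rw [Finset.card_eq_zero, Finset.filter_eq_empty_iff]
        rintro ⟨i, j⟩ _ ⟨hij, -⟩
        exact absurd (Subsingleton.elim i j) (ne_of_lt hij)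
      have hn2 : n2L (wVal p) = 0 := by
        unfold n2L
        rw [Finset.card_eq_zero, Finset.filter_eq_empty_iff]
        rintro ⟨i, j⟩ _ ⟨hij, -⟩
        exact absurd (Subsingleton.elim i j) (ne_of_lt hij)
      have hrl : rlmin (wVal p) = ∅ := by
        unfold rlmin
        rw [Finset.filter_eq_empty_iff]
        rintro i _ ⟨h1, -⟩
        have := (goodF_wVal p).1 i
        omega
      rw [wt, hinv, hn2, hrl]
      simp
    rw [Finset.sum_congr rfl fun p _ => hwt p, Finset.sum_const, Finset.card_univ]
    have hcard : Fintype.card (Equiv.Perm (Fin 1) × (Fin 1 → Bool)) = 2 := by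
      simp [Fintype.card_perm]
    rw [hcard, Finset.Icc_eq_empty (by omega), Finset.prod_empty]
    simp
  | succ n hn ih =>
    have key : ∑ g' ∈ SW (n+1), wt q t g' =
        ∑ x ∈ (Finset.univ : Finset (Fin (n+1) × Bool)) ×ˢ SW n,
          ((if x.1.2 then q ^ (n + (x.1.1 : ℕ)) else q ^ (n - (x.1.1 : ℕ))) *
            (if x.1.2 = false ∧ x.1.1 = Fin.last n then t (n+1) else 1)) * wt q t x.2 := by
      refine Finset.sum_bij'
        (fun g' hg' => ((posK (mem_SW.mp hg'), decide (g' (posK (mem_SW.mp hg')) < 0)),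
          (posK (mem_SW.mp hg')).removeNth g'))
        (fun x _ => insF n x.1.1 x.1.2 x.2) ?_ ?_ ?_ ?_ ?_
      · intro g' hg'
        rw [Finset.mem_product]
        exact ⟨Finset.mem_univ _,
          mem_SW.mpr (goodF_removeNth (mem_SW.mp hg') (posK_spec (mem_SW.mp hg')))⟩
      · intro x hx
        rw [Finset.mem_product] at hx
        exact mem_SW.mpr (goodF_insF (mem_SW.mp hx.2) x.1.1 x.1.2)
      · intro g' hg'
        exact insF_reconstruct (mem_SW.mp hg')
      · rintro ⟨⟨k, b⟩, g2⟩ hx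
        rw [Finset.mem_product] at hx
        have hgood := mem_SW.mp hx.2
        have hk : ∀ (h : goodF (n+1) (insF n k b g2)), posK h = k :=
          fun h => posK_eq h (natAbs_insF_same k b g2)
        simp only [hk, sign_insF, removeNth_insF]
      · intro g' hg'
        have hgood := mem_SW.mp hg'
        conv_lhs => rw [← insF_reconstruct hgood]
        rw [wt_insF q t (goodF_removeNth hgood (posK_spec hgood)) hn]
    rw [key, Finset.sum_product]
    have step1 : ∀ kb : Fin (n+1) × Bool,
        (∑ g ∈ SW n,
          ((if kb.2 then q ^ (n + (kb.1 : ℕ)) else q ^ (n - (kb.1 : ℕ))) *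
            (if kb.2 = false ∧ kb.1 = Fin.last n then t (n+1) else 1)) * wt q t g)
        = ((if kb.2 then q ^ (n + (kb.1 : ℕ)) else q ^ (n - (kb.1 : ℕ))) *
            (if kb.2 = false ∧ kb.1 = Fin.last n then t (n+1) else 1)) *
            ∑ g ∈ SW n, wt q t g := by
      intro kb
      rw [Finset.mul_sum]
    rw [Finset.sum_congr rfl fun kb _ => step1 kb, ← Finset.sum_mul, sum_ins_factor, ih,
      Finset.prod_Icc_succ_top (show 2 ≤ n+1 by omega)]
    have : n + 1 - 1 = n := rfl
    rw [this]
    ring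

lemma sum_even_odd {R : Type*} [CommRing R] (q : R) (t : ℕ → R) (hn : 1 ≤ n) :
    ∑ g ∈ (SW n).filter (fun g => n1F g % 2 = 0), wt q t g
      = ∑ g ∈ (SW n).filter (fun g => ¬ (n1F g % 2 = 0)), wt q t g := by
  refine Finset.sum_bij' (fun g _ => nu g) (fun g _ => nu g) ?_ ?_ ?_ ?_ ?_
  · intro g hg
    rw [Finset.mem_filter] at hg ⊢
    have hgood := mem_SW.mp hg.1
    refine ⟨mem_SW.mpr (goodF_nu hgood), ?_⟩
    rw [n1F_nu hgood hn]
    omega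
  · intro g hg
    rw [Finset.mem_filter] at hg ⊢
    have hgood := mem_SW.mp hg.1
    refine ⟨mem_SW.mpr (goodF_nu hgood), ?_⟩
    rw [n1F_nu hgood hn]
    omega
  · intro g _; exact nu_nu g
  · intro g _; exact nu_nu g
  · intro g hg
    exact (wt_nu q t (mem_SW.mp (Finset.mem_filter.mp hg).1)).symm

lemma two_mul_sum_even {R : Type*} [CommRing R] (q : R) (t : ℕ → R) (hn : 1 ≤ n) :
    2 * ∑ g ∈ (SW n).filter (fun g => n1F g % 2 = 0), wt q t g
      = 2 * ∏ i ∈ Finset.Icc 2 n, ((1 + q ^ (i - 1)) * qInt q i - 1 + t i) := by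
  have hsplit := Finset.sum_filter_add_sum_filter_not (SW n)
    (fun g => n1F g % 2 = 0) (wt q t)
  rw [← sum_SW q t hn, ← hsplit, two_mul]
  nth_rewrite 2 [sum_even_odd q t hn]
  rfl

lemma lhs_eq_sum_even {R : Type*} [CommRing R] (q : R) (t : ℕ → R) :
    ∑ p ∈ Finset.univ.filter
        (fun p : Equiv.Perm (Fin n) × (Fin n → Bool) => n1F (wVal p) % 2 = 0),
        q ^ (invL (wVal p) + n2L (wVal p)) *
          ∏ i ∈ Finset.univ.filter
              (fun i : Fin n => 1 < wVal p i ∧ ∀ j, i < j → wVal p i < |wVal p j|),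
            t (wVal p i).toNat
      = ∑ g ∈ (SW n).filter (fun g => n1F g % 2 = 0), wt q t g := by
  have himg : (Finset.univ.filter (fun p : Equiv.Perm (Fin n) × (Fin n → Bool) =>
      n1F (wVal p) % 2 = 0)).image wVal = (SW n).filter (fun g => n1F g % 2 = 0) := by
    ext g
    simp only [Finset.mem_image, Finset.mem_filter, Finset.mem_univ, true_and]
    constructor
    · rintro ⟨p, hp, rfl⟩
      exact ⟨Finset.mem_image.mpr ⟨p, Finset.mem_univ _, rfl⟩, hp⟩
    · rintro ⟨hg, hp⟩
      obtain ⟨p, -, rfl⟩ := Finset.mem_image.mp hg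
      exact ⟨p, hp, rfl⟩
  calc (∑ p ∈ Finset.univ.filter
        (fun p : Equiv.Perm (Fin n) × (Fin n → Bool) => n1F (wVal p) % 2 = 0),
        q ^ (invL (wVal p) + n2L (wVal p)) *
          ∏ i ∈ Finset.univ.filter
              (fun i : Fin n => 1 < wVal p i ∧ ∀ j, i < j → wVal p i < |wVal p j|),
            t (wVal p i).toNat)
      = ∑ p ∈ Finset.univ.filter
        (fun p : Equiv.Perm (Fin n) × (Fin n → Bool) => n1F (wVal p) % 2 = 0),
          wt q t (wVal p) := rfl
    _ = ∑ g ∈ (Finset.univ.filter (fun p : Equiv.Perm (Fin n) × (Fin n → Bool) =>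
          n1F (wVal p) % 2 = 0)).image wVal, wt q t g :=
        (Finset.sum_image (fun x _ y _ h => wVal_injective h)).symm
    _ = _ := by rw [himg]

end ProofAux

end
/-- Joint distribution of `(ℓ_D, Rlmin_D)` over the even-signed permutation group `D_n`. -/
theorem stmt14 (n : ℕ) (hn : 1 ≤ n) (R : Type*) [CommRing R] (q : R) (t : ℕ → R) :
    ∑ p ∈ Finset.univ.filter
        (fun p : Equiv.Perm (Fin n) × (Fin n → Bool) => n1F (wVal p) % 2 = 0),
        q ^ (invL (wVal p) + n2L (wVal p)) *
          ∏ i ∈ Finset.univ.filter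
              (fun i : Fin n => 1 < wVal p i ∧ ∀ j, i < j → wVal p i < |wVal p j|),
            t (wVal p i).toNat
      = ∏ i ∈ Finset.Icc 2 n, ((1 + q ^ (i - 1)) * qInt q i - 1 + t i) := by
  rw [lhs_eq_sum_even q t]
  set Q : MvPolynomial (Option ℕ) ℤ := MvPolynomial.X none with hQ
  set T : ℕ → MvPolynomial (Option ℕ) ℤ := fun i => MvPolynomial.X (some i) with hT
  have h2 : (2 : MvPolynomial (Option ℕ) ℤ) ≠ 0 := two_ne_zero
  have hpoly : (∑ g ∈ (SW n).filter (fun g => n1F g % 2 = 0), wt Q T g)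
      = ∏ i ∈ Finset.Icc 2 n, ((1 + Q ^ (i-1)) * qInt Q i - 1 + T i) :=
    mul_left_cancel₀ h2 (two_mul_sum_even Q T hn)
  set φ : MvPolynomial (Option ℕ) ℤ →ₐ[ℤ] R :=
    MvPolynomial.aeval (fun o : Option ℕ => o.elim q t) with hφ
  have hQq : φ Q = q := by rw [hQ, hφ, MvPolynomial.aeval_X]; rfl
  have hTt : ∀ i, φ (T i) = t i := by
    intro i
    rw [hT, hφ]
    show (MvPolynomial.aeval fun o : Option ℕ => o.elim q t) (MvPolynomial.X (some i)) = t i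
    rw [MvPolynomial.aeval_X]
    rfl
  have hq : ∀ m : ℕ, φ (qInt Q m) = qInt q m := by
    intro m
    rw [qInt, map_sum, qInt]
    exact Finset.sum_congr rfl fun i _ => by rw [map_pow, hQq]
  have hLHS : φ (∑ g ∈ (SW n).filter (fun g => n1F g % 2 = 0), wt Q T g)
      = ∑ g ∈ (SW n).filter (fun g => n1F g % 2 = 0), wt q t g := by
    rw [map_sum]
    refine Finset.sum_congr rfl fun g _ => ?_
    rw [wt, wt, map_mul, map_pow, hQq, map_prod]
    congr 1
    exact Finset.prod_congr rfl fun i _ => hTt _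
  have hRHS : φ (∏ i ∈ Finset.Icc 2 n, ((1 + Q ^ (i-1)) * qInt Q i - 1 + T i))
      = ∏ i ∈ Finset.Icc 2 n, ((1 + q ^ (i-1)) * qInt q i - 1 + t i) := by
    rw [map_prod]
    refine Finset.prod_congr rfl fun i _ => ?_
    rw [map_add, map_sub, map_mul, map_add, map_one, map_pow, hQq, hq, hTt]
  rw [← hLHS, hpoly, hRHS]
end

section
/- Let F be a linear tree of size n, w a signed labeling of F, and σ = w(v_1)···w(v_n) ∈ B_n. Then sor_B(F,w) = sor_B(σ^{-1}). -/
open Finset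

open scoped Classical

noncomputable section

variable {n : ℕ}

/-! ### Auxiliary development for `stmt17`. -/

/-- `w` is a signed permutation with absolute values given by `q`. -/
def SPq (w : Fin n → ℤ) (q : Equiv.Perm (Fin n)) : Prop := ∀ x, |w x| = (q x : ℤ) + 1

lemma sp_filter_eq (w : Fin n → ℤ) (q : Equiv.Perm (Fin n)) (hq : SPq w q) (i : Fin n) :
    (univ.filter fun x => |w x| = (i : ℤ) + 1) = {q.symm i} := by
  ext x
  simp only [mem_filter, mem_univ, true_and, mem_singleton, hq x]
  constructor
  · intro h
    have hx : q x = i := Fin.ext (by exact_mod_cast (by omega : ((q x : ℤ)) = ((i : ℕ) : ℤ)))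
    rw [← hx, Equiv.symm_apply_apply]
  · rintro rfl; rw [Equiv.apply_symm_apply]

lemma getD_singleton (j d : Fin n) : (({j} : Finset (Fin n)).max).getD d = j := rfl

lemma ginv_apply (w : Fin n → ℤ) (q : Equiv.Perm (Fin n)) (hq : SPq w q) (x : Fin n) :
    ginv w x = if 0 < w (q.symm x) then ((q.symm x : ℤ) + 1) else -((q.symm x : ℤ) + 1) := by
  simp only [ginv, sp_filter_eq w q hq, getD_singleton]

lemma sp_ginv (w : Fin n → ℤ) (q : Equiv.Perm (Fin n)) (hq : SPq w q) :
    SPq (ginv w) q.symm := by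
  intro x
  rw [ginv_apply w q hq x]
  split
  · rw [abs_of_pos (by positivity)]
  · rw [abs_neg, abs_of_pos (by positivity)]

lemma q_fix (w : Fin n → ℤ) (q : Equiv.Perm (Fin n)) (hq : SPq w q) (i : Fin n)
    (hfix : ∀ x : Fin n, (i : ℕ) < (x : ℕ) → w x = (x : ℤ) + 1) :
    ∀ x : Fin n, (i : ℕ) < (x : ℕ) → q x = x := by
  intro x hx
  have h1 := hq x
  rw [hfix x hx] at h1
  have h0 : |(x : ℤ) + 1| = (x : ℤ) + 1 := abs_of_pos (by positivity)
  rw [h0] at h1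
  have h2 : ((q x : ℕ) : ℤ) = ((x : ℕ) : ℤ) := by omega
  exact Fin.ext (by exact_mod_cast h2)

lemma le_iff_q_le (w : Fin n → ℤ) (q : Equiv.Perm (Fin n)) (hq : SPq w q) (i : Fin n)
    (hfix : ∀ x : Fin n, (i : ℕ) < (x : ℕ) → w x = (x : ℤ) + 1) :
    ∀ y : Fin n, y ≤ i ↔ q y ≤ i := by
  intro y
  constructor
  · intro h
    by_contra hc
    have h2 : (i : ℕ) < ((q y) : ℕ) := Fin.lt_def.mp (not_le.mp hc)
    have h3 : q (q y) = q y := q_fix w q hq i hfix (q y) h2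
    have h4 := q.injective h3
    rw [← h4] at h
    exact absurd (Fin.le_def.mp h) (by omega)
  · intro h
    by_contra hc
    have h2 : (i : ℕ) < (y : ℕ) := Fin.lt_def.mp (not_le.mp hc)
    rw [q_fix w q hq i hfix y h2] at h
    exact absurd (Fin.le_def.mp h) (by omega)

lemma card_below (w : Fin n → ℤ) (q : Equiv.Perm (Fin n)) (hq : SPq w q) (i : Fin n)
    (hfix : ∀ x : Fin n, (i : ℕ) < (x : ℕ) → w x = (x : ℤ) + 1)
    (m : ℕ) (hm : m ≤ (i : ℕ) + 1)
    {dp : DecidablePred fun y : Fin n => y ≤ i ∧ |w y| < (m : ℤ) + 1} :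
    (@Finset.filter _ _ dp univ).card = m := by
  rw [Finset.filter_congr_decidable]
  have hmn : m ≤ n := le_trans hm i.isLt
  refine (Finset.card_bij' (fun y _ => (q y : ℕ))
    (fun b hb => q.symm ⟨b, lt_of_lt_of_le (Finset.mem_range.mp hb) hmn⟩)
    ?_ ?_ ?_ ?_).trans (Finset.card_range m)
  · intro a ha
    rw [Finset.mem_filter] at ha
    obtain ⟨-, -, h3⟩ := ha
    rw [hq a] at h3
    rw [Finset.mem_range]
    show (q a : ℕ) < m
    omega
  · intro b hb
    have hb' := Finset.mem_range.mp hb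
    rw [Finset.mem_filter]
    refine ⟨Finset.mem_univ _, ?_, ?_⟩
    · rw [le_iff_q_le w q hq i hfix, Equiv.apply_symm_apply]
      exact Fin.le_def.mpr (by simpa using by omega)
    · rw [hq _, Equiv.apply_symm_apply]
      simp only [Fin.val_mk]
      push_cast
      omega
  · intro a ha
    exact q.symm_apply_apply a
  · intro b hb
    exact congrArg Fin.val (q.apply_symm_apply _)

lemma u_max_eq (w : Fin n → ℤ) (q : Equiv.Perm (Fin n)) (hq : SPq w q) (i : Fin n)
    (hfix : ∀ x : Fin n, (i : ℕ) < (x : ℕ) → w x = (x : ℤ) + 1) (d : Fin n)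
    {dp : DecidablePred fun x : Fin n => q.symm i ≤ x ∧ |w x| ≤ (i : ℤ) + 1} :
    ((@Finset.filter _ _ dp univ).max).getD d = i := by
  rw [Finset.filter_congr_decidable]
  have hvle : q.symm i ≤ i := by
    rw [le_iff_q_le w q hq i hfix, Equiv.apply_symm_apply]
  have hmem : i ∈ univ.filter fun x => q.symm i ≤ x ∧ |w x| ≤ (i : ℤ) + 1 := by
    rw [Finset.mem_filter]
    refine ⟨Finset.mem_univ _, hvle, ?_⟩
    have h1 := hq i
    have h2 : q i ≤ i := by rw [← le_iff_q_le w q hq i hfix]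
    have h3 := Fin.le_def.mp h2
    rw [h1]
    omega
  have hle : ∀ b ∈ univ.filter fun x => q.symm i ≤ x ∧ |w x| ≤ (i : ℤ) + 1, b ≤ i := by
    intro b hb
    rw [Finset.mem_filter] at hb
    by_contra hc
    have h2 : (i : ℕ) < (b : ℕ) := Fin.lt_def.mp (not_le.mp hc)
    have h4 := hfix b h2
    rw [h4, abs_of_pos (by positivity)] at hb
    have h5 := hb.2.2
    omega
  have hmax : (univ.filter fun x => q.symm i ≤ x ∧ |w x| ≤ (i : ℤ) + 1).max
      = (i : WithBot (Fin n)) :=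
    le_antisymm (Finset.max_le fun b hb => WithBot.coe_le_coe.mpr (hle b hb))
      (Finset.le_max hmem)
  rw [hmax]; rfl

/-- the new labeling after one sorting step. -/
def wNextD (w : Fin n → ℤ) (i v : Fin n) : Fin n → ℤ :=
  if 0 < w v then Function.update (Function.update w i (w v)) v (w i)
  else Function.update (Function.update w i (-(w v))) v (-(w i))

/-- the amount contributed by one sorting step. -/
def amtD (w : Fin n → ℤ) (i : Fin n) : ℤ :=
  ((i : ℤ) + 1) - w i - (if w i < 0 then 1 else 0)

lemma stepB_eq (i : Fin n) (w : Fin n → ℤ) (q : Equiv.Perm (Fin n)) (hq : SPq w q)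
    (hfix : ∀ x : Fin n, (i : ℕ) < (x : ℕ) → w x = (x : ℤ) + 1) (c : Fin n → ℤ) (t : ℤ) :
    sortStepB (fun a b : Fin n => a ≤ b) i (w, c, t) =
      (wNextD w i (q.symm i), Function.update c i (amtD w i), t + amtD w i) := by
  have hv : ((univ.filter fun x => |w x| = (i : ℤ) + 1).max).getD i = q.symm i := by
    rw [sp_filter_eq w q hq i]; rfl
  have hqi : q i ≤ i := (le_iff_q_le w q hq i hfix i).mp le_rfl
  have hwi : |w i| = ((q i : ℕ) : ℤ) + 1 := hq i
  have hwv : |w (q.symm i)| = (i : ℤ) + 1 := by rw [hq, Equiv.apply_symm_apply]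
  simp only [sortStepB, stdVal, Finset.filter_congr_decidable]
  rw [hv, u_max_eq w q hq i hfix i, hwv, hwi,
    card_below w q hq i hfix (i : ℕ) (by omega),
    card_below w q hq i hfix ((q i : ℕ)) (by have := Fin.le_def.mp hqi; omega)]
  have habs : |(if w ((Equiv.symm q) i) < 0 then (-1:ℤ) else 1) * ((i : ℤ) + 1)| = (i : ℤ) + 1 := by
    by_cases h : w ((Equiv.symm q) i) < 0
    · rw [if_pos h, neg_one_mul, abs_neg, abs_of_pos (by positivity)]
    · rw [if_neg h, one_mul, abs_of_pos (by positivity)]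
  have hstd : (if w i < 0 then (-1:ℤ) else 1) * (((q i : ℕ) : ℤ) + 1) = w i := by
    by_cases h : w i < 0
    · rw [abs_of_neg h] at hwi; simp only [if_pos h]; omega
    · rw [abs_of_nonneg (not_lt.mp h)] at hwi; simp only [if_neg h]; omega
  rw [habs, hstd]
  simp only [wNextD, amtD]

lemma wNextD_self (w : Fin n → ℤ) (i v : Fin n) (hwv : |w v| = (i : ℤ) + 1) :
    wNextD w i v i = (i : ℤ) + 1 := by
  have hv : w v = (i : ℤ) + 1 ∨ w v = -((i : ℤ) + 1) := (abs_eq (by positivity)).mp hwv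
  unfold wNextD
  by_cases hvi : v = i
  · subst hvi
    by_cases h : 0 < w v
    · rw [if_pos h, Function.update_self]; omega
    · rw [if_neg h, Function.update_self]; omega
  · have hiv : i ≠ v := Ne.symm hvi
    by_cases h : 0 < w v
    · rw [if_pos h, Function.update_of_ne hiv, Function.update_self]; omega
    · rw [if_neg h, Function.update_of_ne hiv, Function.update_self]; omega

lemma wNextD_v (w : Fin n → ℤ) (i v : Fin n) (hvi : v ≠ i) :
    wNextD w i v v = (if 0 < w v then w i else -(w i)) := by
  unfold wNextD
  by_cases h : 0 < w v
  · rw [if_pos h, if_pos h, Function.update_self]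
  · rw [if_neg h, if_neg h, Function.update_self]

lemma wNextD_other (w : Fin n → ℤ) (i v x : Fin n) (hxi : x ≠ i) (hxv : x ≠ v) :
    wNextD w i v x = w x := by
  unfold wNextD
  by_cases h : 0 < w v
  · rw [if_pos h, Function.update_of_ne hxv, Function.update_of_ne hxi]
  · rw [if_neg h, Function.update_of_ne hxv, Function.update_of_ne hxi]

lemma sp_next (w : Fin n → ℤ) (q : Equiv.Perm (Fin n)) (hq : SPq w q) (i : Fin n) :
    SPq (wNextD w i (q.symm i)) (q * Equiv.swap i (q.symm i)) := by
  intro x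
  have hwv : |w (q.symm i)| = (i : ℤ) + 1 := by rw [hq, Equiv.apply_symm_apply]
  by_cases hxi : x = i
  · rw [hxi, wNextD_self w i (q.symm i) hwv]
    simp only [Equiv.Perm.mul_apply, Equiv.swap_apply_left, Equiv.apply_symm_apply]
    exact abs_of_pos (by positivity)
  · by_cases hxv : x = q.symm i
    · have hvi : q.symm i ≠ i := by rw [← hxv]; exact hxi
      rw [hxv, wNextD_v w i (q.symm i) hvi]
      simp only [Equiv.Perm.mul_apply, Equiv.swap_apply_right]
      by_cases h : 0 < w (q.symm i)
      · rw [if_pos h]; exact hq i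
      · rw [if_neg h, abs_neg]; exact hq i
    · rw [wNextD_other w i (q.symm i) x hxi hxv]
      simp only [Equiv.Perm.mul_apply, Equiv.swap_apply_of_ne_of_ne hxi hxv]
      exact hq x

lemma ginv_next (w : Fin n → ℤ) (q : Equiv.Perm (Fin n)) (hq : SPq w q) (i : Fin n) :
    ginv (wNextD w i (q.symm i)) =
      if 0 < w i then
        Function.update (Function.update (ginv w) (q i) (ginv w i)) i ((i : ℤ) + 1)
      else
        Function.update (Function.update (ginv w) (q i) (-(ginv w i))) i ((i : ℤ) + 1) := by
  have hwv : |w (q.symm i)| = (i : ℤ) + 1 := by rw [hq, Equiv.apply_symm_apply]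
  have hwv0 : w (q.symm i) ≠ 0 := by
    intro h; rw [h] at hwv; simp at hwv; omega
  have hwi0 : w i ≠ 0 := by
    intro h; have := hq i; rw [h] at this; simp at this; omega
  have hsym : ∀ x, (q * Equiv.swap i (q.symm i)).symm x = Equiv.swap i (q.symm i) (q.symm x) := by
    intro x
    simp only [← Equiv.Perm.inv_def, mul_inv_rev, Equiv.Perm.mul_apply, Equiv.swap_inv]
  funext x
  rw [ginv_apply (wNextD w i (q.symm i)) (q * Equiv.swap i (q.symm i)) (sp_next w q hq i) x,
    hsym x]
  by_cases hxi : x = i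
  · subst hxi
    rw [Equiv.swap_apply_right, wNextD_self w x (q.symm x) hwv]
    rw [if_pos (by positivity)]
    split <;> rw [Function.update_self]
  · by_cases hxq : x = q i
    · have hqii : q i ≠ i := fun h => hxi (by rw [hxq, h])
      have hvi : q.symm i ≠ i := fun h => hqii ((q.symm_apply_eq.mp h).symm)
      subst hxq
      rw [Equiv.symm_apply_apply, Equiv.swap_apply_left, wNextD_v w i (q.symm i) hvi]
      have hgi : ginv w i = if 0 < w (q.symm i) then ((q.symm i : ℤ) + 1) else -((q.symm i : ℤ) + 1) :=
        ginv_apply w q hq i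
      by_cases hv : 0 < w (q.symm i) <;> by_cases hi : 0 < w i
      · rw [if_pos hv, if_pos hi, if_pos hi, Function.update_of_ne hqii, Function.update_self,
          hgi, if_pos hv]
      · rw [if_pos hv, if_neg hi, if_neg hi, Function.update_of_ne hqii, Function.update_self,
          hgi, if_pos hv]
      · rw [if_neg hv, if_neg (by omega : ¬ (0:ℤ) < -(w i)), if_pos hi,
          Function.update_of_ne hqii, Function.update_self, hgi, if_neg hv]
      · rw [if_neg hv, if_pos (by omega : (0:ℤ) < -(w i)), if_neg hi,
          Function.update_of_ne hqii, Function.update_self, hgi, if_neg hv, neg_neg]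
    · have h1 : q.symm x ≠ i := fun h => hxq (by rw [← h, Equiv.apply_symm_apply])
      have h2 : q.symm x ≠ q.symm i := fun h => hxi (q.symm.injective h)
      rw [Equiv.swap_apply_of_ne_of_ne h1 h2, wNextD_other w i (q.symm i) (q.symm x) h1 h2,
        ← ginv_apply w q hq x]
      split <;> rw [Function.update_of_ne hxi, Function.update_of_ne hxq]

lemma stepP_eq (i : Fin n) (w : Fin n → ℤ) (q : Equiv.Perm (Fin n)) (hq : SPq w q)
    (hfix : ∀ x : Fin n, (i : ℕ) < (x : ℕ) → w x = (x : ℤ) + 1) (t : ℤ) :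
    sorStepP i (ginv w, t) = (ginv (wNextD w i (q.symm i)), t + amtD w i) := by
  have hqi : q i ≤ i := (le_iff_q_le w q hq i hfix i).mp le_rfl
  have hwi : |w i| = ((q i : ℕ) : ℤ) + 1 := hq i
  have hwi0 : w i ≠ 0 := by intro h; rw [h] at hwi; simp at hwi; omega
  have hj : ((univ.filter fun x => |ginv w x| = (i : ℤ) + 1).max).getD i = q i := by
    rw [sp_filter_eq (ginv w) q.symm (sp_ginv w q hq) i, getD_singleton, Equiv.symm_symm]
  have hg : ginv w (q i) = if 0 < w i then ((i : ℤ) + 1) else -((i : ℤ) + 1) := by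
    rw [ginv_apply w q hq (q i), Equiv.symm_apply_apply]
  simp only [sorStepP]
  rw [hj, hg, ginv_next w q hq i]
  by_cases hi : 0 < w i
  · rw [if_pos hi, if_pos (show (0:ℤ) < (i:ℤ) + 1 by positivity),
      if_pos (show (0:ℤ) < (i:ℤ) + 1 by positivity), if_pos hi]
    have hwi' : w i = ((q i : ℕ) : ℤ) + 1 := by rw [abs_of_pos hi] at hwi; exact hwi
    have h2 : ((i : ℤ) + 1) - ((q i : ℤ) + 1) = amtD w i := by
      unfold amtD; rw [if_neg (by omega : ¬ w i < 0)]; omega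
    rw [h2]
  · have hneg : w i < 0 := lt_of_le_of_ne (not_lt.mp hi) hwi0
    have hwi' : w i = -(((q i : ℕ) : ℤ) + 1) := by rw [abs_of_neg hneg] at hwi; omega
    rw [if_neg hi, if_neg (show ¬ (0:ℤ) < -((i:ℤ) + 1) by omega),
      if_neg (show ¬ (0:ℤ) < -((i:ℤ) + 1) by omega), if_neg hi, neg_neg]
    have h2 : ((i : ℤ) + 1) + ((q i : ℤ) + 1) - 1 = amtD w i := by
      unfold amtD; rw [if_pos hneg]; omega
    rw [h2]

lemma fold_sim : ∀ (l : List (Fin n)), l.Pairwise (fun a b : Fin n => b < a) →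
    (∀ x y : Fin n, x ∈ l → y < x → y ∈ l) →
    ∀ (w : Fin n → ℤ) (q : Equiv.Perm (Fin n)) (c : Fin n → ℤ) (t : ℤ), SPq w q →
    (∀ x : Fin n, x ∉ l → w x = (x : ℤ) + 1) →
    l.foldl (fun s i => sorStepP i s) (ginv w, t) =
      (ginv (l.foldl (fun s i => sortStepB (fun a b : Fin n => a ≤ b) i s) (w, c, t)).1,
       (l.foldl (fun s i => sortStepB (fun a b : Fin n => a ≤ b) i s) (w, c, t)).2.2)
  | [] => by intro _ _ w q c t _ _; simp [List.foldl]
  | i :: l' => by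
    intro hpair hdc w q c t hq hfix'
    obtain ⟨hhead, htail⟩ := List.pairwise_cons.mp hpair
    have hfixi : ∀ x : Fin n, (i : ℕ) < (x : ℕ) → w x = (x : ℤ) + 1 := by
      intro x hx
      refine hfix' x fun hmem => ?_
      rcases List.mem_cons.mp hmem with h | h
      · subst h; omega
      · have := Fin.lt_def.mp (hhead x h); omega
    rw [List.foldl_cons, List.foldl_cons, stepB_eq i w q hq hfixi c t, stepP_eq i w q hq hfixi t]
    have hwv : |w (q.symm i)| = (i : ℤ) + 1 := by rw [hq, Equiv.apply_symm_apply]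
    have hvi_mem : q.symm i ≠ i → q.symm i ∈ l' := by
      intro hne
      have h1 : q.symm i ≤ i := by
        rw [le_iff_q_le w q hq i hfixi, Equiv.apply_symm_apply]
      have hvlt : q.symm i < i := lt_of_le_of_ne h1 hne
      rcases List.mem_cons.mp (hdc i (q.symm i) List.mem_cons_self hvlt) with h | h
      · exact absurd h hne
      · exact h
    exact fold_sim l' htail
      (fun x y hx hy => by
        rcases List.mem_cons.mp (hdc x y (List.mem_cons_of_mem i hx) hy) with h | h
        · rw [h] at hy; exact absurd (hhead x hx) (lt_asymm hy)
        · exact h)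
      (wNextD w i (q.symm i)) (q * Equiv.swap i (q.symm i)) _ _ (sp_next w q hq i)
      (by
        intro x hx
        by_cases hxi : x = i
        · rw [hxi, wNextD_self w i (q.symm i) hwv]
        · by_cases hxv : x = q.symm i
          · exact absurd (hvi_mem (hxv ▸ hxi)) (hxv ▸ hx)
          · rw [wNextD_other w i (q.symm i) x hxi hxv]
            exact hfix' x (fun hmem => by
              rcases List.mem_cons.mp hmem with h | h
              · exact hxi h
              · exact hx h))
end
/-- For a linear tree (the chain, i.e. the order `≤` on `Fin n`) with signed labeling `w` and
corresponding signed permutation `σ = w(v_1)⋯w(v_n)`, `sor_B(F,w) = sor_B(σ⁻¹)`. -/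
theorem stmt17 (n : ℕ) (p : Equiv.Perm (Fin n) × (Fin n → Bool)) :
    sorBF (fun i j : Fin n => i ≤ j) (wVal p) = sorBperm (ginv (wVal p)) := by
  have hq : SPq (wVal p) p.1 := by
    intro x
    unfold wVal
    by_cases h : p.2 x
    · rw [if_pos h, neg_one_mul, abs_neg, abs_of_pos (by positivity)]
    · rw [if_neg h, one_mul, abs_of_pos (by positivity)]
  have hpair : ((List.finRange n).reverse).Pairwise (fun a b : Fin n => b < a) := by
    rw [List.pairwise_reverse]; exact List.pairwise_lt_finRange n
  have hdc : ∀ x y : Fin n, x ∈ (List.finRange n).reverse → y < x →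
      y ∈ (List.finRange n).reverse :=
    fun x y _ _ => List.mem_reverse.mpr (List.mem_finRange y)
  have key := fold_sim ((List.finRange n).reverse) hpair hdc (wVal p) p.1
    (fun _ => (0 : ℤ)) 0 hq
    (fun x hx => absurd (List.mem_reverse.mpr (List.mem_finRange x)) hx)
  unfold sorBperm
  rw [key]
  rfl
end

section
/- Let (m_1,...,m_n) be the M-code of a labeled forest (F,w). Then m_1 + ... + m_n = maj(F,w), and m_i = 0 if and only if v_i is a cyclic bottom-to-top maximum of (F,w). -/
open Finset

open scoped Classical

section Aux

open scoped Classical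

variable {n : ℕ} {r : Fin n → Fin n → Prop}

/-- strict ancestors -/
noncomputable def anc (r : Fin n → Fin n → Prop) (v : Fin n) : Finset (Fin n) :=
  univ.filter fun x => strictR r v x

lemma mem_anc {v x : Fin n} : x ∈ anc r v ↔ strictR r v x := by
  simp [anc]

lemma not_self_mem_anc {v : Fin n} : v ∉ anc r v := by
  intro h; exact (mem_anc.mp h).2 rfl

lemma parentW_empty (w : Equiv.Perm (Fin n)) {v : Fin n} (h : anc r v = ∅) :
    parentW r w v = n + 1 := by
  rw [parentW, dif_neg]
  rw [Finset.not_nonempty_iff_eq_empty]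
  exact h

lemma parentW_min' (w : Equiv.Perm (Fin n)) {v : Fin n} (h : (anc r v).Nonempty) :
    parentW r w v = (w ((anc r v).min' h) : ℕ) + 1 := by
  rw [parentW]
  exact dif_pos h

lemma anc_insert (hF : IsForest r) {u : Fin n} (h : (anc r u).Nonempty) :
    anc r u = insert ((anc r u).min' h) (anc r ((anc r u).min' h)) := by
  set p := (anc r u).min' h with hp
  have hmem : p ∈ anc r u := Finset.min'_mem _ h
  have hup : strictR r u p := mem_anc.mp hmem
  ext x
  simp only [mem_anc, Finset.mem_insert]
  constructor
  · intro hx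
    by_cases hxp : x = p
    · exact Or.inl hxp
    · right
      rcases hF.2.1 u x p hx.1 hup.1 with hxp' | hpx
      · exfalso
        have h1 : x ≤ p := hF.2.2 x p hxp'
        have h2 : p ≤ x := Finset.min'_le _ x (mem_anc.mpr hx)
        exact hxp (le_antisymm h1 h2)
      · exact ⟨hpx, fun hh => hxp hh.symm⟩
  · rintro (rfl | hx)
    · exact hup
    · refine ⟨hF.1.trans u p x hup.1 hx.1, fun huv => ?_⟩
      have hxp : r x p := huv ▸ hup.1
      exact hx.2 (hF.1.antisymm p x hx.1 hxp)

/-- the condition in the M-code, for the pair (counted vertex u, vertex i). -/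
def cnd (r : Fin n → Fin n → Prop) (w : Equiv.Perm (Fin n)) (u i : Fin n) : Prop :=
  if (w i : ℕ) + 1 < parentW r w i then
    (w i : ℕ) + 1 ≤ (w u : ℕ) + 1 ∧ (w u : ℕ) + 1 ≤ parentW r w i
  else
    ¬(parentW r w i ≤ (w u : ℕ) + 1 ∧ (w u : ℕ) + 1 ≤ (w i : ℕ) + 1)

lemma val_ne_of_ne (w : Equiv.Perm (Fin n)) {a b : Fin n} (h : a ≠ b) :
    (w a : ℕ) ≠ (w b : ℕ) := fun hh => h (w.injective (Fin.ext hh))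

/-- key chain lemma -/
lemma Qlem (hF : IsForest r) (w : Equiv.Perm (Fin n)) (u : Fin n) :
    ∀ k (i : Fin n), (anc r i).card = k → strictR r u i →
    (∑ j ∈ insert i (anc r i), if cnd r w u j then 1 else 0)
      = (if (w i : ℕ) < (w u : ℕ) then 1 else 0)
        + ∑ j ∈ insert i (anc r i), if parentW r w j < (w j : ℕ) + 1 then 1 else 0 := by
  intro k
  induction k using Nat.strong_induction_on with
  | _ k IH =>
    intro i hcard hui
    have hwiu : (w i : ℕ) ≠ (w u : ℕ) := val_ne_of_ne w (fun hh => hui.2 hh.symm)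
    have hinot : i ∉ anc r i := not_self_mem_anc
    rcases Finset.eq_empty_or_nonempty (anc r i) with he | hne
    · -- i is a root
      have hpar : parentW r w i = n + 1 := parentW_empty w he
      have hlt : (w i : ℕ) < n := (w i).isLt
      have hlt' : (w u : ℕ) < n := (w u).isLt
      rw [he, Finset.sum_insert (Finset.notMem_empty i),
        Finset.sum_insert (Finset.notMem_empty i), hpar]
      simp only [Finset.sum_empty]
      have hcnd : cnd r w u i ↔
          ((w i : ℕ) + 1 ≤ (w u : ℕ) + 1 ∧ (w u : ℕ) + 1 ≤ n + 1) := by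
        rw [cnd, hpar, if_pos (by omega)]
      by_cases hc : cnd r w u i
      · rw [if_pos hc]; rw [hcnd] at hc
        split_ifs <;> omega
      · rw [if_neg hc]; rw [hcnd] at hc
        split_ifs <;> omega
    · -- i has a parent p
      set p := (anc r i).min' hne with hpdef
      have hins : anc r i = insert p (anc r p) := anc_insert hF hne
      have hip : strictR r i p := mem_anc.mp (Finset.min'_mem _ hne)
      have hup : strictR r u p :=
        ⟨hF.1.trans u i p hui.1 hip.1,
         fun hh => hui.2 (hF.1.antisymm u i hui.1 (by rw [hh]; exact hip.1))⟩
      have hpnot : p ∉ anc r p := not_self_mem_anc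
      have hcard' : (anc r p).card < k := by
        subst hcard
        rw [hins, Finset.card_insert_of_notMem hpnot]
        omega
      have hIH := IH _ hcard' p rfl hup
      have hpar : parentW r w i = (w p : ℕ) + 1 := parentW_min' w hne
      have hwip : (w i : ℕ) ≠ (w p : ℕ) := val_ne_of_ne w hip.2
      have hwpu : (w p : ℕ) ≠ (w u : ℕ) := val_ne_of_ne w (fun hh => hup.2 hh.symm)
      rw [Finset.sum_insert hpnot, Finset.sum_insert hpnot] at hIH
      rw [Finset.sum_insert hinot, Finset.sum_insert hinot, hins,
        Finset.sum_insert hpnot, Finset.sum_insert hpnot, hIH, hpar]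
      have hcnd : cnd r w u i ↔
          (if (w i : ℕ) + 1 < (w p : ℕ) + 1 then
            (w i : ℕ) + 1 ≤ (w u : ℕ) + 1 ∧ (w u : ℕ) + 1 ≤ (w p : ℕ) + 1
          else ¬((w p : ℕ) + 1 ≤ (w u : ℕ) + 1 ∧ (w u : ℕ) + 1 ≤ (w i : ℕ) + 1)) := by
        rw [cnd, hpar]
      by_cases hc : cnd r w u i
      · rw [if_pos hc]; rw [hcnd] at hc
        split_ifs at hc ⊢ <;> omega
      · rw [if_neg hc]; rw [hcnd] at hc
        split_ifs at hc ⊢ <;> omega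

lemma perU (hF : IsForest r) (w : Equiv.Perm (Fin n)) (u : Fin n) :
    (∑ i : Fin n, if strictR r u i ∧ cnd r w u i then 1 else 0)
      = ∑ i : Fin n, if r u i ∧ parentW r w i < (w i : ℕ) + 1 then 1 else 0 := by
  have hall : (univ.filter fun i => r u i) = insert u (anc r u) := by
    ext x
    simp only [Finset.mem_filter, Finset.mem_univ, true_and, Finset.mem_insert, mem_anc, strictR]
    constructor
    · intro hx
      by_cases hxu : x = u
      · exact Or.inl hxu
      · exact Or.inr ⟨hx, fun hh => hxu hh.symm⟩
    · rintro (rfl | hx)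
      · exact hF.1.refl x
      · exact hx.1
  have hL : (∑ i : Fin n, if strictR r u i ∧ cnd r w u i then 1 else 0)
      = ∑ i ∈ anc r u, if cnd r w u i then 1 else 0 := by
    rw [anc, Finset.sum_filter]
    apply Finset.sum_congr rfl
    intro i _
    by_cases h1 : strictR r u i <;> simp [h1]
  have hR : (∑ i : Fin n, if r u i ∧ parentW r w i < (w i : ℕ) + 1 then 1 else 0)
      = ∑ i ∈ insert u (anc r u), if parentW r w i < (w i : ℕ) + 1 then 1 else 0 := by
    rw [← hall, Finset.sum_filter]
    apply Finset.sum_congr rfl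
    intro i _
    by_cases h1 : r u i <;> simp [h1]
  rw [hL, hR, Finset.sum_insert not_self_mem_anc]
  rcases Finset.eq_empty_or_nonempty (anc r u) with he | hne
  · rw [he]
    have hpar : parentW r w u = n + 1 := parentW_empty w he
    have hd : ¬ parentW r w u < (w u : ℕ) + 1 := by
      rw [hpar]; have := (w u).isLt; omega
    simp [hd]
  · set p := (anc r u).min' hne with hpdef
    have hins : anc r u = insert p (anc r p) := anc_insert hF hne
    have hup : strictR r u p := mem_anc.mp (Finset.min'_mem _ hne)
    have hpar : parentW r w u = (w p : ℕ) + 1 := parentW_min' w hne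
    have hQ := Qlem hF w u (anc r p).card p rfl hup
    rw [hins, hQ, hpar]
    have hwpu : (w p : ℕ) ≠ (w u : ℕ) := val_ne_of_ne w (fun hh => hup.2 hh.symm)
    split_ifs <;> omega

lemma mcode_eq_sum (r : Fin n → Fin n → Prop) (w : Equiv.Perm (Fin n)) (i : Fin n) :
    mcodeF r w i = ∑ u : Fin n, if strictR r u i ∧ cnd r w u i then 1 else 0 := by
  rw [mcodeF]
  split_ifs with h
  · rw [Finset.card_filter]
    apply Finset.sum_congr rfl
    intro u _
    have hc : cnd r w u i ↔
        ((w i : ℕ) + 1 ≤ (w u : ℕ) + 1 ∧ (w u : ℕ) + 1 ≤ parentW r w i) := by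
      rw [cnd, if_pos h]
    simp only [hc]
  · rw [Finset.card_filter]
    apply Finset.sum_congr rfl
    intro u _
    have hc : cnd r w u i ↔
        ¬(parentW r w i ≤ (w u : ℕ) + 1 ∧ (w u : ℕ) + 1 ≤ (w i : ℕ) + 1) := by
      rw [cnd, if_neg h]
    simp only [hc]

lemma maj_eq_sum (r : Fin n → Fin n → Prop) (w : Equiv.Perm (Fin n)) :
    majF r w = ∑ i : Fin n, ∑ u : Fin n,
      if r u i ∧ parentW r w i < (w i : ℕ) + 1 then 1 else 0 := by
  rw [majF, Finset.sum_filter]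
  apply Finset.sum_congr rfl
  intro i _
  by_cases h : parentW r w i < (w i : ℕ) + 1
  · rw [if_pos h, hook, Finset.card_filter]
    apply Finset.sum_congr rfl
    intro u _
    simp [h]
  · simp [h]

end Aux

/-- The M-code sums to the major index, and its zeros are exactly the cyclic
bottom-to-top maxima. -/
theorem stmt18 (n : ℕ) (r : Fin n → Fin n → Prop) (hF : IsForest r)
    (w : Equiv.Perm (Fin n)) :
    (∑ i : Fin n, mcodeF r w i = majF r w) ∧
      ∀ i : Fin n, (mcodeF r w i = 0 ↔ i ∈ CbtmaxF r w) := by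
  constructor
  · calc ∑ i : Fin n, mcodeF r w i
        = ∑ i : Fin n, ∑ u : Fin n, if strictR r u i ∧ cnd r w u i then 1 else 0 :=
          Finset.sum_congr rfl fun i _ => mcode_eq_sum r w i
      _ = ∑ u : Fin n, ∑ i : Fin n, if strictR r u i ∧ cnd r w u i then 1 else 0 :=
          Finset.sum_comm
      _ = ∑ u : Fin n, ∑ i : Fin n, if r u i ∧ parentW r w i < (w i : ℕ) + 1 then 1 else 0 :=
          Finset.sum_congr rfl fun u _ => perU hF w u
      _ = ∑ i : Fin n, ∑ u : Fin n, if r u i ∧ parentW r w i < (w i : ℕ) + 1 then 1 else 0 :=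
          Finset.sum_comm
      _ = majF r w := (maj_eq_sum r w).symm
  · intro i
    rw [mcodeF, CbtmaxF]
    simp only [Finset.mem_filter, Finset.mem_univ, true_and]
    split_ifs with h
    · rw [Finset.card_eq_zero, Finset.filter_eq_empty_iff]
      constructor
      · intro hh u hu hcond
        exact hh (Finset.mem_univ u) ⟨hu, hcond⟩
      · intro hh u _ hcond
        exact hh u hcond.1 hcond.2
    · rw [Finset.card_eq_zero, Finset.filter_eq_empty_iff]
      constructor
      · intro hh u hu
        by_contra hcond
        exact hh (Finset.mem_univ u) ⟨hu, hcond⟩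
      · intro hh u _ hcond
        exact hcond.2 (hh u hcond.1)
end
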